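/- arXiv:2012.15491 — 6 statements merged into one kernel-verified Lean document; each statement's English description precedes it below -/
import Mathlib

section
/- Let G be a group, H a nonzero complex Hilbert space, and U : G → B(H) a family of unitary operators projective with multiplier ν. Let S be a set of bounded operators on H with trivial commutant, and let ι : G → B(H) assign to each g a unitary operator such that ι(g) ∘ ι(h) = ι(g·h) for all g, h ∈ G and such that ι(g) ∘ A ∘ ι(g)⁻¹ = U(g) ∘ A ∘ U(g)⁻¹ for all A ∈ S and all g ∈ G. Then there exists μ : G → ℂ with |μ(g)| = 1 such that U(g) = μ(g) • ι(g) for all g, and ν(g,h) = μ(g)·μ(h)·μ(g·h)⁻¹ for all g, h ∈ G; in particular ν is a coboundary. -/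
/-- If a projective family of unitaries `U` with multiplier `ν` implements the same
conjugation on a set `S` with trivial commutant as a genuine unitary representation `ι`,
then `U g = μ g • ι g` for phases `μ` and `ν` is the coboundary of `μ`. -/
theorem projective_multiplier_is_coboundary_of_genuine_implementation
    {G : Type*} [Group G] {H : Type*} [NormedAddCommGroup H]
    [InnerProductSpace ℂ H] [CompleteSpace H] [Nontrivial H]
    (U : G → (H →L[ℂ] H)) (hU : ∀ g, U g ∈ unitary (H →L[ℂ] H))
    (ν : G → G → ℂ)
    (hproj : ∀ g h, U g * U h = ν g h • U (g * h))
    (S : Set (H →L[ℂ] H))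
    (hS : ∀ T : H →L[ℂ] H, (∀ A ∈ S, T * A = A * T) → ∃ c : ℂ, T = c • (1 : H →L[ℂ] H))
    (ι : G → (H →L[ℂ] H)) (hι : ∀ g, ι g ∈ unitary (H →L[ℂ] H))
    (hιrep : ∀ g h, ι g * ι h = ι (g * h))
    (hconj : ∀ g, ∀ A ∈ S, ι g * A * star (ι g) = U g * A * star (U g)) :
    ∃ μ : G → ℂ, (∀ g, ‖μ g‖ = 1) ∧ (∀ g, U g = μ g • ι g) ∧
      ∀ g h, ν g h = μ g * μ h * (μ (g * h))⁻¹ := by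
  have hone : (1 : H →L[ℂ] H) ≠ 0 := one_ne_zero
  have scalar_inj : ∀ a b : ℂ, a • (1 : H →L[ℂ] H) = b • (1 : H →L[ℂ] H) → a = b := by
    intro a b hab
    obtain ⟨x, hx⟩ := exists_ne (0 : H)
    have hx' : a • x = b • x := by
      have := congrArg (fun T : H →L[ℂ] H => T x) hab
      simpa using this
    exact smul_left_injective ℂ hx hx'
  have key : ∀ g : G, ∃ c : ℂ, star (ι g) * U g = c • (1 : H →L[ℂ] H) := by
    intro g
    apply hS
    intro A hA
    have h1 := hconj g A hA
    have hι1 : star (ι g) * ι g = 1 := (Unitary.mem_iff.mp (hι g)).1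
    have hU1 : star (U g) * U g = 1 := (Unitary.mem_iff.mp (hU g)).1
    have e1 : star (ι g) * (U g * A * star (U g)) * U g = star (ι g) * (U g * A) := by
      simp only [mul_assoc, hU1, mul_one]
    have e2 : star (ι g) * (ι g * A * star (ι g)) * U g = A * (star (ι g) * U g) := by
      simp only [mul_assoc]
      rw [← mul_assoc, hι1, one_mul]
    rw [mul_assoc, ← e1, ← h1, e2]
  choose μ hμ using key
  have hUμ : ∀ g, U g = μ g • ι g := by
    intro g
    have hι2 : ι g * star (ι g) = 1 := (Unitary.mem_iff.mp (hι g)).2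
    calc U g = (ι g * star (ι g)) * U g := by rw [hι2, one_mul]
      _ = ι g * (star (ι g) * U g) := by rw [mul_assoc]
      _ = ι g * (μ g • 1) := by rw [hμ g]
      _ = μ g • ι g := by rw [mul_smul_comm, mul_one]
  have hconjμ : ∀ g, star (μ g) * μ g = 1 := by
    intro g
    have hU1 : star (U g) * U g = 1 := (Unitary.mem_iff.mp (hU g)).1
    have hι1 : star (ι g) * ι g = 1 := (Unitary.mem_iff.mp (hι g)).1
    rw [hUμ g, star_smul, smul_mul_smul_comm, hι1] at hU1
    have h2 : (star (μ g) * μ g) • (1 : H →L[ℂ] H) = (1 : ℂ) • (1 : H →L[ℂ] H) := by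
      rw [one_smul]; exact hU1
    exact scalar_inj _ _ h2
  have hnorm : ∀ g, ‖μ g‖ = 1 := by
    intro g
    have h := congrArg norm (hconjμ g)
    rw [norm_mul, norm_star, norm_one] at h
    nlinarith [norm_nonneg (μ g)]
  have hμne : ∀ g, μ g ≠ 0 := by
    intro g h
    have := hnorm g
    rw [h, norm_zero] at this
    norm_num at this
  refine ⟨μ, hnorm, hUμ, ?_⟩
  intro g h
  have hp := hproj g h
  rw [hUμ g, hUμ h, hUμ (g * h), smul_mul_smul_comm, hιrep, smul_smul] at hp
  have hιne : ι (g * h) ≠ 0 := by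
    intro hz
    have := (Unitary.mem_iff.mp (hι (g * h))).1
    rw [hz, mul_zero] at this
    exact hone this.symm
  have hsc : μ g * μ h = ν g h * μ (g * h) := by
    by_contra hne
    have hz := sub_eq_zero.mpr hp
    rw [← sub_smul] at hz
    rcases smul_eq_zero.mp hz with h' | h'
    · exact hne (sub_eq_zero.mp h')
    · exact hιne h'
  rw [hsc, mul_assoc, mul_inv_cancel₀ (hμne _), mul_one]
end

section
/- Let G be a finite group and V a finite-dimensional complex representation of G which is faithful and contains a nonzero G-invariant vector. Then for every irreducible finite-dimensional complex representation W of G there exists L₀ ∈ ℕ such that for all L ≥ L₀ the space Hom_G(W, V^{⊗L}) of G-equivariant linear maps is nonzero, i.e. d(L) := dim_ℂ Hom_G(W, V^{⊗L}) > 0. -/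
open scoped TensorProduct

/-- The space `Hom_G(W, V^{⊗L})` of `G`-equivariant linear maps from `W` to the `L`-fold
tensor power of `V` (with the diagonal `G`-action). -/
noncomputable def equivariantHom {G V W : Type*} [Group G]
    [AddCommGroup V] [Module ℂ V] [AddCommGroup W] [Module ℂ W]
    (ρV : Representation ℂ G V) (ρW : Representation ℂ G W) (L : ℕ) :
    Submodule ℂ (W →ₗ[ℂ] (⨂[ℂ] _ : Fin L, V)) where
  carrier := { f | ∀ g : G,
    (PiTensorProduct.map fun _ : Fin L => ρV g) ∘ₗ f = f ∘ₗ ρW g }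
  add_mem' := by
    intro f f' hf hf' g
    rw [LinearMap.comp_add, LinearMap.add_comp, hf g, hf' g]
  zero_mem' := by
    intro g
    rw [LinearMap.comp_zero, LinearMap.zero_comp]
  smul_mem' := by
    intro c f hf g
    rw [LinearMap.comp_smul, LinearMap.smul_comp, hf g]

namespace EquivariantHomAux

open Polynomial

/-! ### Tensor power linear algebra -/

section TPow

variable {V : Type*} [AddCommGroup V] [Module ℂ V]

/-- Splitting off the last tensor factor. -/
noncomputable def tpowSuccEquiv (V : Type*) [AddCommGroup V] [Module ℂ V] (L : ℕ) :
    (⨂[ℂ] _ : Fin (L + 1), V) ≃ₗ[ℂ] (⨂[ℂ] _ : Fin L, V) ⊗[ℂ] V :=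
  (PiTensorProduct.reindex ℂ (fun _ : Fin (L + 1) => V) finSumFinEquiv.symm).trans <|
    (PiTensorProduct.tmulEquiv ℂ V).symm.trans <|
      TensorProduct.congr (LinearEquiv.refl ℂ _)
        (PiTensorProduct.subsingletonEquiv (0 : Fin 1))

lemma tpowSuccEquiv_comm (f : V →ₗ[ℂ] V) (L : ℕ) :
    (tpowSuccEquiv V L).toLinearMap ∘ₗ PiTensorProduct.map (fun _ : Fin (L + 1) => f)
      = TensorProduct.map (PiTensorProduct.map fun _ : Fin L => f) f ∘ₗ
          (tpowSuccEquiv V L).toLinearMap := by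
  apply PiTensorProduct.ext
  ext x
  simp [tpowSuccEquiv, PiTensorProduct.reindex_tprod, PiTensorProduct.tmulEquiv_symm_apply,
    PiTensorProduct.subsingletonEquiv_apply_tprod, PiTensorProduct.map_tprod,
    TensorProduct.map_tmul]

lemma finiteDimensional_tpow [FiniteDimensional ℂ V] (L : ℕ) :
    FiniteDimensional ℂ (⨂[ℂ] _ : Fin L, V) := by
  induction L with
  | zero => exact (PiTensorProduct.isEmptyEquiv (Fin 0)).symm.finiteDimensional
  | succ L ih => exact (tpowSuccEquiv V L).symm.finiteDimensional

lemma map_tpow_zero (f : V →ₗ[ℂ] V) :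
    PiTensorProduct.map (fun _ : Fin 0 => f) = LinearMap.id := by
  apply PiTensorProduct.ext
  ext x
  simp only [PiTensorProduct.map_tprod, LinearMap.compMultilinearMap_apply, LinearMap.id_coe,
    id_eq]
  congr 1
  funext i
  exact i.elim0

lemma trace_map_tpow [FiniteDimensional ℂ V] (f : V →ₗ[ℂ] V) (L : ℕ) :
    LinearMap.trace ℂ _ (PiTensorProduct.map (fun _ : Fin L => f))
      = (LinearMap.trace ℂ V f) ^ L := by
  induction L with
  | zero =>
      rw [map_tpow_zero, pow_zero]
      have h1 : Module.finrank ℂ (⨂[ℂ] _ : Fin 0, V) = 1 := by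
        rw [(PiTensorProduct.isEmptyEquiv (Fin 0)).finrank_eq, Module.finrank_self]
      haveI := finiteDimensional_tpow (V := V) 0
      rw [← Module.End.one_eq_id, LinearMap.trace_one, h1]
      norm_num
  | succ L ih =>
      haveI := finiteDimensional_tpow (V := V) L
      have h2 : (tpowSuccEquiv V L).conj (PiTensorProduct.map (fun _ : Fin (L + 1) => f))
          = TensorProduct.map (PiTensorProduct.map fun _ : Fin L => f) f := by
        apply LinearMap.ext
        intro x
        have := LinearMap.congr_fun (tpowSuccEquiv_comm f L) ((tpowSuccEquiv V L).symm x)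
        simpa [LinearEquiv.conj_apply] using this
      rw [← LinearMap.trace_conj' _ (tpowSuccEquiv V L), h2, LinearMap.trace_tensorProduct',
        ih, pow_succ]

end TPow

/-! ### Representation-theoretic lemmas -/

section RepTheory

variable {G : Type*} [Group G] {V W : Type*} [AddCommGroup V] [Module ℂ V]
  [AddCommGroup W] [Module ℂ W]

/-- The tensor power representation. -/
noncomputable def tpowRep (ρV : Representation ℂ G V) (L : ℕ) :
    Representation ℂ G (⨂[ℂ] _ : Fin L, V) where
  toFun g := PiTensorProduct.map fun _ : Fin L => ρV g
  map_one' := by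
    have h : (fun _ : Fin L => ρV 1) = fun _ : Fin L => (1 : V →ₗ[ℂ] V) := by
      funext i; rw [map_one]
    show PiTensorProduct.map (fun _ : Fin L => ρV 1) = 1
    rw [h, PiTensorProduct.map_one]
  map_mul' g h := by
    have h' : (fun _ : Fin L => ρV (g * h))
        = fun _ : Fin L => (ρV g * ρV h : V →ₗ[ℂ] V) := by
      funext i; rw [map_mul]
    show PiTensorProduct.map (fun _ : Fin L => ρV (g * h)) = _
    rw [h', PiTensorProduct.map_mul]

lemma avg_trace_eq_finrank_invariants [Fintype G] [Invertible ((Fintype.card G : ℂ))]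
    {U : Type*} [AddCommGroup U] [Module ℂ U] [FiniteDimensional ℂ U]
    (ρ : Representation ℂ G U) :
    ⅟(Fintype.card G : ℂ) • ∑ g : G, LinearMap.trace ℂ U (ρ g)
      = Module.finrank ℂ ρ.invariants := by
  rw [← (Representation.isProj_averageMap ρ).trace]
  simp [Representation.averageMap, GroupAlgebra.average, map_sum]

lemma trace_linHom_eq [FiniteDimensional ℂ V] [FiniteDimensional ℂ W]
    (ρW : Representation ℂ G W) (ρT : Representation ℂ G V) (g : G) :
    LinearMap.trace ℂ _ ((ρW.linHom ρT) g)
      = LinearMap.trace ℂ W (ρW g⁻¹) * LinearMap.trace ℂ V (ρT g) := by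
  have h2 : (dualTensorHomEquiv ℂ W V).conj (TensorProduct.map (ρW.dual g) (ρT g))
      = (ρW.linHom ρT) g := by
    apply LinearMap.ext
    intro x
    have := LinearMap.congr_fun (Representation.dualTensorHom_comm ρW ρT g)
      ((dualTensorHomEquiv ℂ W V).symm x)
    simpa [LinearEquiv.conj_apply] using this
  rw [← h2, LinearMap.trace_conj', LinearMap.trace_tensorProduct']
  congr 1
  exact LinearMap.trace_transpose' (ρW g⁻¹)

lemma equivariantHom_eq_invariants (ρV : Representation ℂ G V) (ρW : Representation ℂ G W)
    (L : ℕ) :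
    equivariantHom ρV ρW L = (ρW.linHom (tpowRep ρV L)).invariants := by
  ext f
  have hmem : f ∈ equivariantHom ρV ρW L ↔
      ∀ g : G, (PiTensorProduct.map fun _ : Fin L => ρV g) ∘ₗ f = f ∘ₗ ρW g := Iff.rfl
  rw [hmem, Representation.mem_invariants]
  have hT : ∀ g : G, (tpowRep ρV L) g = PiTensorProduct.map fun _ : Fin L => ρV g :=
    fun _ => rfl
  constructor
  · intro hf g
    rw [Representation.linHom_apply]
    apply LinearMap.ext
    intro x
    have h := LinearMap.congr_fun (hf g) (ρW g⁻¹ x)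
    simp only [LinearMap.comp_apply] at h ⊢
    rw [hT g, h]
    congr 1
    rw [← Module.End.mul_apply, ← map_mul, mul_inv_cancel, map_one, Module.End.one_apply]
  · intro hf g
    have h := hf g
    rw [Representation.linHom_apply] at h
    apply LinearMap.ext
    intro x
    have h2 := LinearMap.congr_fun h (ρW g x)
    simp only [LinearMap.comp_apply] at h2 ⊢
    show (tpowRep ρV L g) (f x) = f (ρW g x)
    rw [hT g] at h2 ⊢
    rw [← h2]
    congr 2
    rw [← Module.End.mul_apply, ← map_mul, inv_mul_cancel, map_one, Module.End.one_apply]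

end RepTheory

/-! ### The unipotent lemma -/

/-- A nilpotent `u` with `(1+u)^k = 1`, `k ≠ 0`, in a `ℂ`-algebra is zero. -/
lemma nilpotent_unipotent_eq_zero {A : Type*} [Ring A] [Algebra ℂ A] {u : A}
    (hu : IsNilpotent u) {k : ℕ} (hk : k ≠ 0) (h : (1 + u) ^ k = 1) : u = 0 := by
  set x : A := 1 + u with hx
  have hxu : x - 1 = u := by rw [hx]; abel
  have hgeom : u * (∑ i ∈ Finset.range k, x ^ i) = 0 := by
    have := mul_geom_sum x k
    rw [h, hxu, sub_self] at this
    exact this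
  have hxi : ∀ i : ℕ, x ^ i = 1 + u * ∑ j ∈ Finset.range i, x ^ j := by
    intro i
    have := mul_geom_sum x i
    rw [hxu] at this
    rw [this]; abel
  set T : A := ∑ i ∈ Finset.range k, ∑ j ∈ Finset.range i, x ^ j with hT
  have hS : (∑ i ∈ Finset.range k, x ^ i) = (k : A) + u * T := by
    rw [hT, Finset.mul_sum]
    calc ∑ i ∈ Finset.range k, x ^ i
        = ∑ i ∈ Finset.range k, (1 + u * ∑ j ∈ Finset.range i, x ^ j) := by
          exact Finset.sum_congr rfl fun i _ => hxi i
      _ = (k : A) + ∑ i ∈ Finset.range k, u * ∑ j ∈ Finset.range i, x ^ j := by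
          rw [Finset.sum_add_distrib]; simp
  have hux : Commute u x := by
    rw [hx]; exact Commute.add_right (Commute.one_right u) (Commute.refl u)
  have huT : Commute u T := by
    apply Commute.sum_right
    intro i _
    apply Commute.sum_right
    intro j _
    exact hux.pow_right j
  have hnil : IsNilpotent (u * T) := huT.isNilpotent_mul_right hu
  have hkA : IsUnit ((k : A)) := by
    have : (k : A) = algebraMap ℂ A (k : ℂ) := by
      simp [map_natCast]
    rw [this]
    exact (IsUnit.map _ (isUnit_iff_ne_zero.2 (by exact_mod_cast hk)))
  have hkuT : Commute (u * T) ((k : A)) := Nat.commute_cast (u * T) k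
  have hS_unit : IsUnit (∑ i ∈ Finset.range k, x ^ i) := by
    rw [hS]
    exact hnil.isUnit_add_left_of_commute hkA hkuT
  obtain ⟨s, hs⟩ := hS_unit
  have : u * (s : A) = 0 := by rw [hs]; exact hgeom
  calc u = u * ((s : A) * ((s⁻¹ : Aˣ) : A)) := by rw [Units.mul_inv, mul_one]
    _ = (u * (s : A)) * ((s⁻¹ : Aˣ) : A) := (mul_assoc _ _ _).symm
    _ = 0 := by rw [this, zero_mul]

/-! ### The spectral bound -/

lemma real_pow_eq_one {x : ℝ} {k : ℕ} (hk : k ≠ 0) (hx : 0 ≤ x) (h : x ^ k = 1) : x = 1 := by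
  rcases lt_trichotomy x 1 with h1 | h1 | h1
  · exfalso; have := pow_lt_one₀ hx h1 hk; rw [h] at this; exact lt_irrefl 1 this
  · exact h1
  · exfalso; have := one_lt_pow₀ h1 hk; rw [h] at this; exact lt_irrefl 1 this

lemma norm_eq_one_of_pow_eq_one {z : ℂ} {k : ℕ} (hk : k ≠ 0) (h : z ^ k = 1) : ‖z‖ = 1 := by
  have h2 : ‖z‖ ^ k = 1 := by rw [← norm_pow, h, norm_one]
  exact real_pow_eq_one hk (norm_nonneg z) h2

/-- Equality case of the triangle inequality for a multiset of unit complex numbers. -/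
lemma multiset_unit_sum_eq (s : Multiset ℂ) (h1 : ∀ z ∈ s, ‖z‖ = 1)
    (h2 : ‖s.sum‖ = (Multiset.card s : ℝ)) : ∀ z ∈ s, ∀ w ∈ s, z = w := by
  induction s using Multiset.induction with
  | empty => intro z hz; simp at hz
  | cons a t ih =>
      have ha : ‖a‖ = 1 := h1 a (Multiset.mem_cons_self a t)
      have h1t : ∀ z ∈ t, ‖z‖ = 1 := fun z hz => h1 z (Multiset.mem_cons_of_mem hz)
      have htle : ‖t.sum‖ ≤ (Multiset.card t : ℝ) := by
        calc ‖t.sum‖ ≤ (t.map (fun z : ℂ => ‖z‖)).sum := norm_multiset_sum_le t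
          _ = (Multiset.card t : ℝ) := by
            have : t.map (fun z : ℂ => ‖z‖) = Multiset.replicate (Multiset.card t) (1 : ℝ) := by
              rw [Multiset.eq_replicate]
              constructor
              · simp
              · intro b hb
                obtain ⟨z, hz, rfl⟩ := Multiset.mem_map.1 hb
                exact h1t z hz
            rw [this, Multiset.sum_replicate]; simp
      have hsum : ‖(a ::ₘ t).sum‖ = ‖a + t.sum‖ := by rw [Multiset.sum_cons]
      have hcard : (Multiset.card (a ::ₘ t) : ℝ) = 1 + Multiset.card t := by
        simp [Multiset.card_cons, add_comm]
      have heq : ‖a + t.sum‖ = 1 + (Multiset.card t : ℝ) := by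
        rw [← hsum, h2, hcard]
      have htsum : ‖t.sum‖ = (Multiset.card t : ℝ) := by
        have hle2 : ‖a + t.sum‖ ≤ ‖a‖ + ‖t.sum‖ := norm_add_le _ _
        rw [heq, ha] at hle2
        linarith [htle, hle2]
      have hray : SameRay ℝ a t.sum := by
        rw [sameRay_iff_norm_add, heq, ha, htsum]
      have iht := ih h1t htsum
      have hta : ∀ z ∈ t, z = a := by
        intro z hz
        have hrep : t = Multiset.replicate (Multiset.card t) z := by
          rw [Multiset.eq_replicate]
          exact ⟨rfl, fun b hb => iht b hb z hz⟩
        have hts : t.sum = (Multiset.card t) • z := by rw [hrep]; simp [Multiset.sum_replicate]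
        have := hray.norm_smul_eq
        rw [ha, htsum, one_smul, hts] at this
        have hc : (0 : ℝ) < (Multiset.card t : ℝ) := by
          have : 0 < Multiset.card t := Multiset.card_pos_iff_exists_mem.2 ⟨z, hz⟩
          exact_mod_cast this
        have : (Multiset.card t : ℝ) • z = (Multiset.card t : ℝ) • a := by
          rw [← this]; rw [Nat.cast_smul_eq_nsmul]
        exact smul_right_injective ℂ (ne_of_gt hc) this
      intro z hz w hw
      rcases Multiset.mem_cons.1 hz with rfl | hz' <;>
        rcases Multiset.mem_cons.1 hw with rfl | hw'
      · rfl
      · exact (hta w hw').symm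
      · exact hta z hz'
      · rw [hta z hz', hta w hw']

section Spectral

variable {V : Type*} [AddCommGroup V] [Module ℂ V]

lemma charpoly_roots_pow_eq_one [FiniteDimensional ℂ V] (f : Module.End ℂ V) {k : ℕ}
    (hk : k ≠ 0) (hfk : f ^ k = 1) :
    ∀ μ ∈ ((LinearMap.toMatrix (Module.finBasis ℂ V) (Module.finBasis ℂ V) f).charpoly).roots,
      μ ^ k = 1 := by
  set b := Module.finBasis ℂ V
  set M := LinearMap.toMatrix b b f with hMdef
  have hM : M ^ k = 1 := by
    have : M = LinearMap.toMatrixAlgEquiv b f := rfl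
    rw [this, ← map_pow, hfk, map_one]
  intro μ hμ
  have hroot : M.charpoly.IsRoot μ := (Polynomial.mem_roots (M.charpoly_monic.ne_zero)).1 hμ
  have h1 : Polynomial.eval μ M.charpoly = (μ • (1 : Matrix _ _ ℂ) - M).det := by
    rw [Matrix.charpoly]
    have hdet := RingHom.map_det (Polynomial.evalRingHom μ) M.charmatrix
    rw [show Polynomial.eval μ M.charmatrix.det
        = (Polynomial.evalRingHom μ) M.charmatrix.det from rfl, hdet]
    congr 1
    ext i j
    by_cases h : i = j
    · subst h
      simp [Matrix.charmatrix_apply_eq, Matrix.one_apply_eq, Matrix.sub_apply]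
    · simp [Matrix.charmatrix_apply_ne _ _ _ h, Matrix.one_apply_ne h, Matrix.sub_apply]
  have hdet0 : (μ • (1 : Matrix _ _ ℂ) - M).det = 0 := by rw [← h1]; exact hroot
  obtain ⟨v, hv, hmv⟩ := Matrix.exists_mulVec_eq_zero_iff.2 hdet0
  have hMv : M.mulVec v = μ • v := by
    have h2 := hmv
    rw [Matrix.sub_mulVec, sub_eq_zero] at h2
    rw [← h2, Matrix.smul_mulVec, Matrix.one_mulVec]
  have hMjv : ∀ j : ℕ, (M ^ j).mulVec v = μ ^ j • v := by
    intro j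
    induction j with
    | zero => simp [Matrix.one_mulVec]
    | succ j ih =>
        rw [pow_succ, ← Matrix.mulVec_mulVec, hMv]
        rw [Matrix.mulVec_smul, ih, pow_succ, smul_smul, mul_comm]
  have := hMjv k
  rw [hM, Matrix.one_mulVec] at this
  have h3 : (μ ^ k - 1) • v = 0 := by rw [sub_smul, one_smul, ← this, sub_self]
  rcases smul_eq_zero.1 h3 with h4 | h4
  · rwa [sub_eq_zero] at h4
  · exact absurd h4 hv

lemma trace_norm_le_finrank [FiniteDimensional ℂ V] (f : Module.End ℂ V) {k : ℕ}
    (hk : k ≠ 0) (hfk : f ^ k = 1) :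
    ‖LinearMap.trace ℂ V f‖ ≤ (Module.finrank ℂ V : ℝ) ∧
      (‖LinearMap.trace ℂ V f‖ = (Module.finrank ℂ V : ℝ) →
        ∃ μ : ℂ, μ ^ k = 1 ∧ f = μ • (1 : Module.End ℂ V)) := by
  classical
  set n := Module.finrank ℂ V with hn
  set b := Module.finBasis ℂ V
  set M := LinearMap.toMatrix b b f with hMdef
  have htr : LinearMap.trace ℂ V f = M.charpoly.roots.sum := by
    rw [LinearMap.trace_eq_matrix_trace ℂ b f, Matrix.trace_eq_sum_roots_charpoly]
  have hsp : M.charpoly.Splits := IsAlgClosed.splits _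
  have hcard : Multiset.card M.charpoly.roots = n := by
    have h1 := hsp.natDegree_eq_card_roots
    rw [← h1, Matrix.charpoly_natDegree_eq_dim, Fintype.card_fin]
  have hroots := charpoly_roots_pow_eq_one f hk hfk
  have hnorm1 : ∀ μ ∈ M.charpoly.roots, ‖μ‖ = 1 := fun μ hμ =>
    norm_eq_one_of_pow_eq_one hk (hroots μ hμ)
  have hmapsum : (M.charpoly.roots.map (fun z : ℂ => ‖z‖)).sum = (n : ℝ) := by
    have : M.charpoly.roots.map (fun z : ℂ => ‖z‖)
        = Multiset.replicate n (1 : ℝ) := by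
      rw [Multiset.eq_replicate]
      refine ⟨by simp [hcard], ?_⟩
      intro x hx
      obtain ⟨z, hz, rfl⟩ := Multiset.mem_map.1 hx
      exact hnorm1 z hz
    rw [this, Multiset.sum_replicate]; simp
  have hle : ‖LinearMap.trace ℂ V f‖ ≤ (n : ℝ) := by
    rw [htr]
    calc ‖M.charpoly.roots.sum‖ ≤ (M.charpoly.roots.map (fun z : ℂ => ‖z‖)).sum :=
          norm_multiset_sum_le _
      _ = (n : ℝ) := hmapsum
  refine ⟨hle, ?_⟩
  intro heq
  by_cases hn0 : n = 0
  · haveI : Subsingleton V := by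
      rw [hn] at hn0
      exact Module.finrank_zero_iff.1 hn0
    exact ⟨1, one_pow k, by ext v; exact Subsingleton.elim _ _⟩
  · have hpos : 0 < Multiset.card M.charpoly.roots := by rw [hcard]; omega
    obtain ⟨lam, hlam⟩ := Multiset.card_pos_iff_exists_mem.1 hpos
    have hpair := multiset_unit_sum_eq M.charpoly.roots hnorm1
      (by rw [← htr, hcard, heq])
    have hrep : M.charpoly.roots = Multiset.replicate n lam := by
      rw [Multiset.eq_replicate]
      exact ⟨hcard, fun b hb => hpair b hb lam hlam⟩
    have hcp : M.charpoly = (X - C lam) ^ n := by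
      have h2 := hsp.eq_prod_roots_of_monic M.charpoly_monic
      rw [hrep, Multiset.map_replicate, Multiset.prod_replicate] at h2
      exact h2
    have hfc : Polynomial.aeval f M.charpoly = 0 := by
      rw [LinearMap.charpoly_toMatrix f b]
      exact LinearMap.aeval_self_charpoly f
    have hnilpow : (f - lam • (1 : Module.End ℂ V)) ^ n = 0 := by
      have := hfc
      rw [hcp, map_pow, map_sub, Polynomial.aeval_X, Polynomial.aeval_C] at this
      have halg : algebraMap ℂ (Module.End ℂ V) lam = lam • (1 : Module.End ℂ V) := by
        rw [Module.algebraMap_end_eq_smul_id]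
        rfl
      rw [halg] at this
      exact this
    have hlamk : lam ^ k = 1 := hroots lam hlam
    have hlam0 : lam ≠ 0 := by
      intro h0; rw [h0, zero_pow hk] at hlamk; exact zero_ne_one hlamk
    set u : Module.End ℂ V := lam⁻¹ • f - 1 with hu
    have hueq : u = lam⁻¹ • (f - lam • (1 : Module.End ℂ V)) := by
      rw [hu, smul_sub, smul_smul, inv_mul_cancel₀ hlam0, one_smul]
    have hunil : IsNilpotent u := by
      refine ⟨n, ?_⟩
      rw [hueq, _root_.smul_pow, hnilpow, smul_zero]
    have honeu : (1 : Module.End ℂ V) + u = lam⁻¹ • f := by rw [hu]; abel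
    have hpow1 : ((1 : Module.End ℂ V) + u) ^ k = 1 := by
      rw [honeu, _root_.smul_pow, hfk, inv_pow, hlamk, inv_one, one_smul]
    have hu0 : u = 0 := nilpotent_unipotent_eq_zero hunil hk hpow1
    refine ⟨lam, hlamk, ?_⟩
    have hinvf : lam⁻¹ • f = 1 := by
      have := hu0
      rw [hu, sub_eq_zero] at this
      exact this
    calc f = lam • (lam⁻¹ • f) := by rw [smul_smul, mul_inv_cancel₀ hlam0, one_smul]
      _ = lam • (1 : Module.End ℂ V) := by rw [hinvf]

end Spectral

end EquivariantHomAux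

open EquivariantHomAux in
/-- If `V` is a faithful finite-dimensional complex representation of a finite group `G`
containing a nonzero invariant vector, then for every irreducible finite-dimensional
complex representation `W` of `G` the dimension `d(L) = dim Hom_G(W, V^{⊗L})` is positive
for all sufficiently large `L`. -/
theorem equivariantHom_tensorPower_eventually_pos
    {G V W : Type*} [Group G] [Finite G]
    [AddCommGroup V] [Module ℂ V] [FiniteDimensional ℂ V]
    [AddCommGroup W] [Module ℂ W] [FiniteDimensional ℂ W]
    (ρV : Representation ℂ G V) (ρW : Representation ℂ G W)
    (hfaithful : Function.Injective ρV)
    (hinv : ∃ v : V, v ≠ 0 ∧ ∀ g : G, ρV g v = v)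
    (hWnz : Nontrivial W)
    (hWirr : ∀ p : Submodule ℂ W, (∀ (g : G), ∀ w ∈ p, ρW g w ∈ p) → p = ⊥ ∨ p = ⊤) :
    ∃ L₀ : ℕ, ∀ L ≥ L₀, 0 < Module.finrank ℂ (equivariantHom ρV ρW L) := by
  classical
  cases nonempty_fintype G
  obtain ⟨v, hv0, hvinv⟩ := hinv
  haveI : Nontrivial V := nontrivial_of_ne v 0 hv0
  set n := Module.finrank ℂ V with hn
  have hnpos : 0 < n := Module.finrank_pos
  have hnR : (0 : ℝ) < (n : ℝ) := by exact_mod_cast hnpos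
  set k := Fintype.card G with hkdef
  have hk : k ≠ 0 := Fintype.card_ne_zero
  set χ : G → ℂ := fun g => LinearMap.trace ℂ V (ρV g) with hχ
  have hfk : ∀ g : G, (ρV g) ^ k = 1 := fun g => by
    rw [← map_pow, pow_card_eq_one, map_one]
  have hχ1 : χ 1 = (n : ℂ) := by
    rw [hχ]; simp only [map_one]; rw [LinearMap.trace_one, hn]
  have hlt : ∀ g : G, g ≠ 1 → ‖χ g‖ < (n : ℝ) := by
    intro g hg
    obtain ⟨hle, heq⟩ := trace_norm_le_finrank (ρV g) hk (hfk g)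
    rcases lt_or_eq_of_le hle with hcase | hcase
    · exact hcase
    · exfalso
      obtain ⟨μ, hμk, hμ⟩ := heq hcase
      have hμv : ρV g v = μ • v := by rw [hμ]; simp
      rw [hvinv g] at hμv
      have h2 : (μ - 1) • v = 0 := by
        rw [sub_smul, one_smul, ← hμv, sub_self]
      have hμ1 : μ = 1 := by
        rcases smul_eq_zero.1 h2 with h3 | h3
        · rwa [sub_eq_zero] at h3
        · exact absurd h3 hv0
      have : ρV g = ρV 1 := by rw [map_one, hμ, hμ1, one_smul]
      exact hg (hfaithful this)
  set χW : G → ℂ := fun g => LinearMap.trace ℂ W (ρW g) with hχW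
  set dW := Module.finrank ℂ W with hdW
  have hdWpos : 0 < dW := Module.finrank_pos
  have hχW1 : χW 1 = (dW : ℂ) := by
    rw [hχW]; simp only [map_one]; rw [LinearMap.trace_one, hdW]
  set s : Finset G := Finset.univ.erase (1 : G) with hs
  set h : ℕ → ℝ := fun L => ∑ g ∈ s, ‖χW g⁻¹‖ * (‖χ g‖ / (n : ℝ)) ^ L with hh
  have htend : Filter.Tendsto h Filter.atTop (nhds 0) := by
    have h0eq : (0 : ℝ) = ∑ g ∈ s, ‖χW g⁻¹‖ * 0 := by simp
    rw [hh, h0eq]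
    apply Filter.Tendsto.congr' (Filter.Eventually.of_forall fun L => rfl)
    apply tendsto_finset_sum
    intro g hg
    have hq0 : 0 ≤ ‖χ g‖ / (n : ℝ) := by positivity
    have hq1 : ‖χ g‖ / (n : ℝ) < 1 := by
      rw [div_lt_one hnR]
      exact hlt g (Finset.ne_of_mem_erase hg)
    exact (tendsto_pow_atTop_nhds_zero_of_lt_one hq0 hq1).const_mul _
  have hev : ∀ᶠ L in Filter.atTop, h L < (dW : ℝ) :=
    htend.eventually_lt_const (by exact_mod_cast hdWpos)
  obtain ⟨L₀, hL₀⟩ := Filter.eventually_atTop.1 hev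
  refine ⟨L₀, fun L hL => ?_⟩
  haveI : Invertible ((Fintype.card G : ℂ)) :=
    invertibleOfNonzero (by exact_mod_cast hk)
  haveI := finiteDimensional_tpow (V := V) L
  have key : (Module.finrank ℂ (equivariantHom ρV ρW L) : ℂ)
      = ⅟(Fintype.card G : ℂ) • ∑ g : G, χW g⁻¹ * (χ g) ^ L := by
    rw [equivariantHom_eq_invariants ρV ρW L,
      ← avg_trace_eq_finrank_invariants]
    congr 1
    apply Finset.sum_congr rfl
    intro g _
    rw [trace_linHom_eq]
    congr 1
    exact trace_map_tpow (ρV g) L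
  by_contra h0
  push_neg at h0
  have hfr : Module.finrank ℂ (equivariantHom ρV ρW L) = 0 := Nat.le_zero.1 h0
  rw [hfr, Nat.cast_zero] at key
  have hS0 : (∑ g : G, χW g⁻¹ * (χ g) ^ L) = 0 := by
    rcases smul_eq_zero.1 key.symm with hc | hc
    · exfalso
      have := invOf_mul_self (Fintype.card G : ℂ)
      rw [hc, zero_mul] at this
      exact zero_ne_one this
    · exact hc
  have hsplit : (∑ g : G, χW g⁻¹ * (χ g) ^ L)
      = χW 1⁻¹ * (χ 1) ^ L + ∑ g ∈ s, χW g⁻¹ * (χ g) ^ L := by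
    rw [hs]
    exact (Finset.add_sum_erase _ _ (Finset.mem_univ 1)).symm
  have ht1 : ‖χW 1⁻¹ * (χ 1) ^ L‖ = (dW : ℝ) * (n : ℝ) ^ L := by
    rw [inv_one, hχW1, hχ1, norm_mul, norm_pow]
    congr 1
    · exact Complex.norm_natCast dW
    · congr 1
      exact Complex.norm_natCast n
  have hrest : ‖∑ g ∈ s, χW g⁻¹ * (χ g) ^ L‖ ≤ h L * (n : ℝ) ^ L := by
    calc ‖∑ g ∈ s, χW g⁻¹ * (χ g) ^ L‖ ≤ ∑ g ∈ s, ‖χW g⁻¹ * (χ g) ^ L‖ :=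
          norm_sum_le _ _
      _ = ∑ g ∈ s, ‖χW g⁻¹‖ * ‖χ g‖ ^ L := by
          apply Finset.sum_congr rfl
          intro g _
          rw [norm_mul, norm_pow]
      _ = h L * (n : ℝ) ^ L := by
          rw [hh, Finset.sum_mul]
          apply Finset.sum_congr rfl
          intro g _
          rw [mul_assoc, div_pow, div_mul_cancel₀]
          positivity
  have hteq : χW 1⁻¹ * (χ 1) ^ L = -(∑ g ∈ s, χW g⁻¹ * (χ g) ^ L) := by
    have := hS0
    rw [hsplit] at this
    linear_combination this
  have hnormeq : (dW : ℝ) * (n : ℝ) ^ L = ‖∑ g ∈ s, χW g⁻¹ * (χ g) ^ L‖ := by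
    rw [← ht1, hteq, norm_neg]
  have hhL : h L < (dW : ℝ) := hL₀ L hL
  have hnL : (0 : ℝ) < (n : ℝ) ^ L := by positivity
  nlinarith [hrest, hnormeq, hhL, hnL]
end

section
/- Let G be a finite group and V a finite-dimensional complex representation of G which is faithful and contains a nonzero G-invariant vector, and let W be an irreducible finite-dimensional complex representation of G. Setting d(L) := dim_ℂ Hom_G(W, V^{⊗L}), one has lim_{L→∞} |G| · d(L) / (dim V)^L = dim W. In particular, if G is nontrivial (so dim V ≥ 2), then d(L) grows exponentially with L. -/
open scoped TensorProduct
open Module LinearMap Polynomial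

namespace EqAux

variable {G V W : Type*} [Group G]
variable [AddCommGroup V] [Module ℂ V]

/-- The diagonal representation on the `L`-fold tensor power. -/
noncomputable def piRep (ρV : Representation ℂ G V) (L : ℕ) :
    Representation ℂ G (⨂[ℂ] _ : Fin L, V) where
  toFun g := PiTensorProduct.map fun _ => ρV g
  map_one' := by
    show PiTensorProduct.map (fun _ : Fin L => ρV 1) = 1
    have h : (fun _ : Fin L => ρV 1) = fun _ : Fin L => (1 : V →ₗ[ℂ] V) := by simp
    rw [h, PiTensorProduct.map_one]
  map_mul' g h := by
    show PiTensorProduct.map (fun _ : Fin L => ρV (g * h)) =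
      PiTensorProduct.map (fun _ : Fin L => ρV g) * PiTensorProduct.map (fun _ : Fin L => ρV h)
    have h2 : (fun _ : Fin L => ρV (g * h)) =
        fun i : Fin L => (fun _ => ρV g) i * (fun _ => ρV h) i := by simp
    rw [h2, PiTensorProduct.map_mul]

def finSuccCast (L : ℕ) : Fin (L + 1) ≃ (Fin 1 ⊕ Fin L) :=
  (finSumFinEquiv.trans (finCongr (Nat.add_comm 1 L))).symm

lemma finSuccCast_symm_inl (L : ℕ) (i : Fin 1) :
    (finSuccCast L).symm (Sum.inl i) = 0 := by
  ext
  simp [finSuccCast, Fin.ext_iff, Fin.val_eq_zero i]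

lemma finSuccCast_symm_inr (L : ℕ) (i : Fin L) :
    (finSuccCast L).symm (Sum.inr i) = i.succ := by
  ext
  simp [finSuccCast, Fin.ext_iff, Nat.add_comm]

noncomputable def succEquiv (L : ℕ) :
    (⨂[ℂ] _ : Fin (L + 1), V) ≃ₗ[ℂ] V ⊗[ℂ] (⨂[ℂ] _ : Fin L, V) :=
  (PiTensorProduct.reindex ℂ (fun _ : Fin (L + 1) => V) (finSuccCast L)).trans
    ((PiTensorProduct.tmulEquiv ℂ V).symm.trans
      (TensorProduct.congr (PiTensorProduct.subsingletonEquiv (0 : Fin 1))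
        (LinearEquiv.refl ℂ _)))

lemma succEquiv_tprod (L : ℕ) (f : Fin (L + 1) → V) :
    succEquiv L (PiTensorProduct.tprod ℂ f) =
      f 0 ⊗ₜ[ℂ] PiTensorProduct.tprod ℂ (fun i => f i.succ) := by
  simp only [succEquiv, LinearEquiv.trans_apply, PiTensorProduct.reindex_tprod,
    PiTensorProduct.tmulEquiv_symm_apply, TensorProduct.congr_tmul,
    PiTensorProduct.subsingletonEquiv_apply_tprod, LinearEquiv.refl_apply,
    finSuccCast_symm_inl, finSuccCast_symm_inr]


variable [FiniteDimensional ℂ V]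

noncomputable instance piFD : ∀ (L : ℕ), FiniteDimensional ℂ (⨂[ℂ] _ : Fin L, V)
  | 0 => (PiTensorProduct.isEmptyEquiv (Fin 0)).symm.finiteDimensional
  | (L + 1) => by
    haveI := piFD L
    exact (succEquiv (V := V) L).symm.finiteDimensional

lemma trace_piMap (A : V →ₗ[ℂ] V) :
    ∀ L : ℕ, trace ℂ _ (PiTensorProduct.map fun _ : Fin L => A) = (trace ℂ V A) ^ L
  | 0 => by
    have h : (fun _ : Fin 0 => A) = fun _ : Fin 0 => LinearMap.id (R := ℂ) (M := V) :=
      funext fun i => i.elim0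
    rw [h, PiTensorProduct.map_id, pow_zero]
    rw [trace_id]
    norm_cast
    rw [(PiTensorProduct.isEmptyEquiv (Fin 0)).finrank_eq]
    simp
  | (L + 1) => by
    have h2 : (succEquiv (V := V) L).toLinearMap ∘ₗ
          (PiTensorProduct.map fun _ : Fin (L + 1) => A) =
        (TensorProduct.map A (PiTensorProduct.map fun _ : Fin L => A)) ∘ₗ
          (succEquiv (V := V) L).toLinearMap := by
      apply PiTensorProduct.ext
      apply MultilinearMap.ext
      intro f
      simp only [LinearMap.compMultilinearMap_apply, LinearMap.coe_comp, Function.comp_apply,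
        LinearEquiv.coe_coe, PiTensorProduct.map_tprod, succEquiv_tprod,
        TensorProduct.map_tmul]
    have h3 : (succEquiv (V := V) L).conj (PiTensorProduct.map fun _ : Fin (L + 1) => A) =
        TensorProduct.map A (PiTensorProduct.map fun _ : Fin L => A) := by
      refine LinearMap.ext fun x => ?_
      have h4 := LinearMap.congr_fun h2 ((succEquiv (V := V) L).symm x)
      simp only [LinearMap.coe_comp, Function.comp_apply, LinearEquiv.coe_coe,
        LinearEquiv.apply_symm_apply] at h4
      simpa [LinearEquiv.conj_apply] using h4
    calc trace ℂ _ (PiTensorProduct.map fun _ : Fin (L + 1) => A)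
        = trace ℂ _ ((succEquiv (V := V) L).conj
            (PiTensorProduct.map fun _ : Fin (L + 1) => A)) := (trace_conj' _ _).symm
      _ = trace ℂ V A * (trace ℂ V A) ^ L := by
          rw [h3, trace_tensorProduct', trace_piMap A L]
      _ = (trace ℂ V A) ^ (L + 1) := (pow_succ' _ _).symm


variable [AddCommGroup W] [Module ℂ W] [FiniteDimensional ℂ W]

lemma finrank_invariants {U : Type*} [AddCommGroup U] [Module ℂ U] [FiniteDimensional ℂ U]
    [Fintype G] (ρ : Representation ℂ G U) :
    ((finrank ℂ ρ.invariants : ℂ)) = (Fintype.card G : ℂ)⁻¹ * ∑ g : G, trace ℂ U (ρ g) := by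
  haveI : Invertible (Fintype.card G : ℂ) :=
    invertibleOfNonzero (by exact_mod_cast (Fintype.card_ne_zero : Fintype.card G ≠ 0))
  rw [← (Representation.isProj_averageMap ρ).trace]
  simp [Representation.averageMap, GroupAlgebra.average, map_sum,
    Representation.asAlgebraHom_single, invOf_eq_inv, Finset.mul_sum]

lemma trace_linHom {U : Type*} [AddCommGroup U] [Module ℂ U] [FiniteDimensional ℂ U]
    (ρ : Representation ℂ G W) (σ : Representation ℂ G U) (g : G) :
    trace ℂ _ (Representation.linHom ρ σ g) = trace ℂ W (ρ g⁻¹) * trace ℂ U (σ g) := by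
  set e := dualTensorHomEquiv ℂ W U with he
  have hcomm := Representation.dualTensorHom_comm ρ σ g
  have h3 : e.conj (TensorProduct.map (ρ.dual g) (σ g)) = Representation.linHom ρ σ g := by
    refine LinearMap.ext fun f => ?_
    have h4 := LinearMap.congr_fun hcomm (e.symm f)
    simp only [LinearMap.coe_comp, Function.comp_apply] at h4
    simpa [LinearEquiv.conj_apply, he, dualTensorHomEquiv,
      dualTensorHomEquivOfBasis_apply, dualTensorHomEquivOfBasis_symm_cancel_right] using h4
  rw [← h3, trace_conj', trace_tensorProduct']
  congr 1
  have : ρ.dual g = Module.Dual.transpose (R := ℂ) (ρ g⁻¹) := rfl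
  rw [this, trace_transpose']





lemma det_smul_one_sub (A : Module.End ℂ V) (μ : ℂ) :
    LinearMap.det (μ • (1 : Module.End ℂ V) - A) = (LinearMap.charpoly A).eval μ := by
  classical
  set b := finBasis ℂ V
  set M := LinearMap.toMatrix b b A with hM
  have h1 : LinearMap.charpoly A = M.charpoly := (LinearMap.charpoly_toMatrix A b).symm
  rw [h1, Matrix.charpoly, _root_.eval_det, Matrix.matPolyEquiv_charmatrix]
  rw [← LinearMap.det_toMatrix b]
  congr 1
  rw [map_sub, map_smul, LinearMap.toMatrix_one]
  simp [Matrix.scalar, Matrix.smul_one_eq_diagonal]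
  rfl

lemma exists_eigvec (A : Module.End ℂ V) {μ : ℂ} (hμ : μ ∈ (LinearMap.charpoly A).roots) :
    ∃ x : V, x ≠ 0 ∧ A x = μ • x := by
  have h0 : (LinearMap.charpoly A).eval μ = 0 := by
    have := (Polynomial.mem_roots'.1 hμ).2
    exact this
  have hdet : LinearMap.det (μ • (1 : Module.End ℂ V) - A) = 0 := by
    rw [det_smul_one_sub]; exact h0
  obtain ⟨x, hx, hx0⟩ := Submodule.exists_mem_ne_zero_of_ne_bot
    (LinearMap.bot_lt_ker_of_det_eq_zero hdet).ne'
  refine ⟨x, hx0, ?_⟩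
  have := LinearMap.mem_ker.1 hx
  have h2 : μ • x - A x = 0 := by simpa using this
  exact (sub_eq_zero.1 h2).symm

lemma pow_eigvec (A : Module.End ℂ V) {μ : ℂ} {x : V} (h : A x = μ • x) :
    ∀ k : ℕ, (A ^ k) x = μ ^ k • x
  | 0 => by simp
  | (k + 1) => by
    rw [pow_succ', pow_succ']
    simp only [Module.End.mul_apply, h, map_smul, pow_eigvec A h k, smul_smul]
    ring_nf







omit [FiniteDimensional ℂ V] in
lemma unit_add_one_lt {μ : ℂ} (h : ‖μ‖ = 1) (hne : μ ≠ 1) : ‖μ + 1‖ < 2 := by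
  have habs : ‖μ‖ = 1 := h
  have hsq : μ.re ^ 2 + μ.im ^ 2 = 1 := by
    have h2 := Complex.sq_norm μ
    rw [habs, one_pow] at h2
    simpa [Complex.normSq_apply, sq] using h2.symm
  have hre : μ.re < 1 := by
    rcases lt_or_eq_of_le ((Complex.re_le_norm μ).trans habs.le) with h1 | h1
    · exact h1
    · exfalso
      apply hne
      have him : μ.im = 0 := by nlinarith
      exact Complex.ext h1 him
  have h2 : ‖μ + 1‖ ^ 2 < 2 ^ 2 := by
    have h3 : ‖μ + 1‖ ^ 2 = Complex.normSq (μ + 1) := Complex.sq_norm _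
    have h4 : ‖μ + 1‖ ^ 2 = (μ.re + 1) ^ 2 + μ.im ^ 2 := by
      rw [show ‖μ + 1‖ = ‖μ + 1‖ from rfl, h3]
      simp [Complex.normSq_apply, Complex.add_re, Complex.add_im, sq]
    rw [h4]
    nlinarith
  have := lt_of_pow_lt_pow_left₀ 2 (by norm_num) h2
  exact this

lemma norm_trace_lt {A : Module.End ℂ V} {m : ℕ} (hm : m ≠ 0) (hAm : A ^ m = 1)
    {v : V} (hv : v ≠ 0) (hAv : A v = v) (hA1 : A ≠ 1) :
    ‖trace ℂ V A‖ < (finrank ℂ V : ℝ) := by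
  haveI : Nontrivial V := ⟨v, 0, hv⟩
  classical
  set p := LinearMap.charpoly A with hp
  have hmonic : p.Monic := LinearMap.charpoly_monic A
  have hsplits : p.Splits := IsAlgClosed.splits p
  set R := p.roots with hR
  have hcard : Multiset.card R = finrank ℂ V := by
    rw [hR, Polynomial.splits_iff_card_roots.1 hsplits, LinearMap.charpoly_natDegree]
  have htrace : trace ℂ V A = R.sum := by
    rw [trace_eq_matrix_trace ℂ (finBasis ℂ V), Matrix.trace_eq_sum_roots_charpoly,
      LinearMap.charpoly_toMatrix A (finBasis ℂ V)]
  have hnorm : ∀ μ ∈ R, ‖μ‖ = 1 := by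
    intro μ hμ
    obtain ⟨x, hx0, hx⟩ := exists_eigvec A hμ
    have h1 : (A ^ m) x = μ ^ m • x := pow_eigvec A hx m
    rw [hAm, Module.End.one_apply] at h1
    have h2 : (μ ^ m - 1) • x = 0 := by
      rw [sub_smul, one_smul, ← h1, sub_self]
    have h3 : μ ^ m = 1 := by
      rcases smul_eq_zero.1 h2 with h | h
      · exact sub_eq_zero.1 h
      · exact absurd h hx0
    have h4 : ‖μ‖ ^ m = 1 := by rw [← norm_pow, h3, norm_one]
    rcases lt_trichotomy ‖μ‖ 1 with h | h | h
    · exact absurd h4 (by have := pow_lt_one₀ (norm_nonneg μ) h hm; linarith)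
    · exact h
    · exact absurd h4 (by have := one_lt_pow₀ h hm; linarith)
  have h1R : (1 : ℂ) ∈ R := by
    have hev : Module.End.HasEigenvalue A 1 :=
      Module.End.hasEigenvalue_of_hasEigenvector
        ⟨Module.End.mem_eigenspace_iff.2 (by simpa using hAv), hv⟩
    have hroot : (minpoly ℂ A).IsRoot 1 := Module.End.isRoot_of_hasEigenvalue hev
    obtain ⟨q, hq⟩ := LinearMap.minpoly_dvd_charpoly A
    refine Polynomial.mem_roots'.2 ⟨hmonic.ne_zero, ?_⟩
    rw [hp, hq]
    simpa using Or.inl hroot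
  by_cases hall : ∀ μ ∈ R, μ = (1 : ℂ)
  · exfalso
    have hrep : R = Multiset.replicate (finrank ℂ V) 1 :=
      Multiset.eq_replicate.2 ⟨hcard, hall⟩
    have hcp : p = (X - Polynomial.C (1 : ℂ)) ^ finrank ℂ V := by
      have h5 := hsplits.eq_prod_roots_of_monic hmonic
      rw [← hR, hrep, Multiset.map_replicate, Multiset.prod_replicate] at h5
      exact h5
    have hss : A.IsSemisimple := by
      refine Module.End.isSemisimple_of_squarefree_aeval_eq_zero
        (p := X ^ m - Polynomial.C 1) ?_ ?_
      · exact (Polynomial.separable_X_pow_sub_C 1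
          (by exact_mod_cast hm) one_ne_zero).squarefree
      · rw [map_sub, Polynomial.aeval_X_pow, Polynomial.aeval_C]
        simp [hAm]
    have hsf := hss.minpoly_squarefree
    have hdvd : minpoly ℂ A ∣ (X - Polynomial.C (1 : ℂ)) ^ finrank ℂ V := by
      rw [← hcp]; exact LinearMap.minpoly_dvd_charpoly A
    obtain ⟨i, him, hassoc⟩ :=
      (dvd_prime_pow (Polynomial.prime_X_sub_C (1 : ℂ)) _).1 hdvd
    match i, hassoc with
    | 0, hassoc =>
      exact minpoly.not_isUnit ℂ A (associated_one_iff_isUnit.1 (by simpa using hassoc))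
    | 1, hassoc =>
      have heq : minpoly ℂ A = X - Polynomial.C 1 :=
        Polynomial.eq_of_monic_of_associated (minpoly.monic (LinearMap.isIntegral A))
          (Polynomial.monic_X_sub_C 1) (by rwa [pow_one] at hassoc)
      have h6 := minpoly.aeval ℂ A
      rw [heq, map_sub, Polynomial.aeval_X, Polynomial.aeval_C] at h6
      exact hA1 (by rwa [map_one, sub_eq_zero] at h6)
    | (i + 2), hassoc =>
      have h7 : (X - Polynomial.C (1 : ℂ)) * (X - Polynomial.C 1) ∣ minpoly ℂ A := by
        have : (X - Polynomial.C (1 : ℂ)) ^ 2 ∣ (X - Polynomial.C (1 : ℂ)) ^ (i + 2) :=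
          pow_dvd_pow _ (by omega)
        rw [sq] at this
        exact this.trans hassoc.symm.dvd
      exact Polynomial.not_isUnit_X_sub_C 1 (hsf _ h7)
  · push_neg at hall
    obtain ⟨μ, hμR, hμ1⟩ := hall
    have h1R' : (1 : ℂ) ∈ R.erase μ :=
      (Multiset.mem_erase_of_ne (Ne.symm hμ1)).2 h1R
    set S := (R.erase μ).erase 1 with hS
    have hR2 : R = μ ::ₘ 1 ::ₘ S := by
      rw [hS, Multiset.cons_erase h1R', Multiset.cons_erase hμR]
    have hsum : R.sum = (μ + 1) + S.sum := by rw [hR2]; simp [add_assoc]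
    have hScard : (Multiset.card R : ℝ) = Multiset.card S + 2 := by
      rw [hR2]; push_cast [Multiset.card_cons]; ring
    have hSnorm : ‖S.sum‖ ≤ (Multiset.card S : ℝ) := by
      refine (norm_multiset_sum_le S).trans ?_
      have hmap : S.map (fun x => ‖x‖) = Multiset.replicate (Multiset.card S) 1 := by
        refine Multiset.eq_replicate.2 ⟨by simp, ?_⟩
        intro b hb
        obtain ⟨x, hxS, rfl⟩ := Multiset.mem_map.1 hb
        exact hnorm x (Multiset.mem_of_mem_erase (Multiset.mem_of_mem_erase hxS))
      rw [hmap, Multiset.sum_replicate]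
      simp
    have hμnorm := unit_add_one_lt (hnorm μ hμR) hμ1
    calc ‖trace ℂ V A‖ = ‖(μ + 1) + S.sum‖ := by rw [htrace, hsum]
      _ ≤ ‖μ + 1‖ + ‖S.sum‖ := norm_add_le _ _
      _ < 2 + Multiset.card S := by linarith
      _ = (Multiset.card R : ℝ) := by rw [hScard]; ring
      _ = (finrank ℂ V : ℝ) := by rw [hcard]



end EqAux



open scoped TensorProduct

section Bridge

variable {G V W : Type*} [Group G]
    [AddCommGroup V] [Module ℂ V] [AddCommGroup W] [Module ℂ W]

lemma equivariantHom_eq_invariants (ρV : Representation ℂ G V) (ρW : Representation ℂ G W)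
    (L : ℕ) :
    equivariantHom ρV ρW L = (Representation.linHom ρW (EqAux.piRep ρV L)).invariants := by
  ext f
  have hmem : f ∈ equivariantHom ρV ρW L ↔ ∀ g : G,
      (PiTensorProduct.map fun _ : Fin L => ρV g) ∘ₗ f = f ∘ₗ ρW g := Iff.rfl
  rw [hmem, Representation.mem_invariants]
  constructor
  · intro hf g
    refine LinearMap.ext fun x => ?_
    have h := LinearMap.congr_fun (hf g) (ρW g⁻¹ x)
    simp only [LinearMap.coe_comp, Function.comp_apply] at h ⊢
    show (PiTensorProduct.map fun _ : Fin L => ρV g) (f (ρW g⁻¹ x)) = f x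
    rw [h, ← Module.End.mul_apply, ← map_mul, mul_inv_cancel, map_one, Module.End.one_apply]
  · intro hf g
    refine LinearMap.ext fun x => ?_
    have h := LinearMap.congr_fun (hf g) (ρW g x)
    simp only [LinearMap.coe_comp, Function.comp_apply] at h ⊢
    show (PiTensorProduct.map fun _ : Fin L => ρV g) (f x) = f (ρW g x)
    have h2 : ρW g⁻¹ (ρW g x) = x := by
      rw [← Module.End.mul_apply, ← map_mul, inv_mul_cancel, map_one, Module.End.one_apply]
    calc (PiTensorProduct.map fun _ : Fin L => ρV g) (f x)
        = (EqAux.piRep ρV L) g (f (ρW g⁻¹ (ρW g x))) := by rw [h2]; rfl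
      _ = f (ρW g x) := h

end Bridge

/-- If `V` is a faithful finite-dimensional complex representation of a finite group `G`
containing a nonzero invariant vector and `W` is an irreducible finite-dimensional complex
representation of `G`, then `|G| * d(L) / (dim V)^L → dim W` as `L → ∞`, where
`d(L) = dim Hom_G(W, V^{⊗L})`.  In particular, if `G` is nontrivial, `d(L)` grows
exponentially with `L`. -/
theorem equivariantHom_tensorPower_dim_asymptotics
    {G V W : Type*} [Group G] [Finite G]
    [AddCommGroup V] [Module ℂ V] [FiniteDimensional ℂ V]
    [AddCommGroup W] [Module ℂ W] [FiniteDimensional ℂ W]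
    (ρV : Representation ℂ G V) (ρW : Representation ℂ G W)
    (hfaithful : Function.Injective ρV)
    (hinv : ∃ v : V, v ≠ 0 ∧ ∀ g : G, ρV g v = v)
    (hWnz : Nontrivial W)
    (hWirr : ∀ p : Submodule ℂ W, (∀ (g : G), ∀ w ∈ p, ρW g w ∈ p) → p = ⊥ ∨ p = ⊤) :
    Filter.Tendsto
      (fun L : ℕ => (Nat.card G : ℝ) * (Module.finrank ℂ (equivariantHom ρV ρW L) : ℝ) /
        (Module.finrank ℂ V : ℝ) ^ L)
      Filter.atTop (nhds (Module.finrank ℂ W : ℝ)) ∧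
    (Nontrivial G →
      ∃ c r : ℝ, 0 < c ∧ 1 < r ∧ ∀ᶠ L : ℕ in Filter.atTop,
        c * r ^ L ≤ (Module.finrank ℂ (equivariantHom ρV ρW L) : ℝ)) := by
  classical
  haveI : Fintype G := Fintype.ofFinite G
  obtain ⟨v, hv0, hvinv⟩ := hinv
  haveI : Nontrivial V := ⟨v, 0, hv0⟩
  set n : ℕ := Module.finrank ℂ V with hn
  have hnpos : 0 < n := Module.finrank_pos
  set χ : G → ℂ := fun g => LinearMap.trace ℂ V (ρV g) with hχ
  set ψ : G → ℂ := fun g => LinearMap.trace ℂ W (ρW g⁻¹) with hψ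
  have hcardpos : 0 < Fintype.card G := Fintype.card_pos
  have hcard0 : (Fintype.card G : ℂ) ≠ 0 := by exact_mod_cast hcardpos.ne'
  have hn0C : ((n : ℂ)) ≠ 0 := by exact_mod_cast hnpos.ne'
  -- complex formula for the dimension
  have hd : ∀ L : ℕ, ((Module.finrank ℂ (equivariantHom ρV ρW L) : ℂ))
      = (Fintype.card G : ℂ)⁻¹ * ∑ g : G, ψ g * (χ g) ^ L := by
    intro L
    rw [equivariantHom_eq_invariants ρV ρW L, EqAux.finrank_invariants]
    congr 1
    refine Finset.sum_congr rfl fun g _ => ?_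
    have h1 : LinearMap.trace ℂ _ ((Representation.linHom ρW (EqAux.piRep ρV L)) g)
        = LinearMap.trace ℂ W (ρW g⁻¹) * LinearMap.trace ℂ _ ((EqAux.piRep ρV L) g) :=
      EqAux.trace_linHom ρW (EqAux.piRep ρV L) g
    rw [h1]
    congr 1
    exact EqAux.trace_piMap (ρV g) L
  -- the normalized complex sequence
  set F : ℕ → ℂ := fun L => ∑ g : G, ψ g * (χ g / n) ^ L with hF
  have hreal : ∀ L : ℕ,
      (((Nat.card G : ℝ) * (Module.finrank ℂ (equivariantHom ρV ρW L) : ℝ) / (n : ℝ) ^ L : ℝ) : ℂ)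
        = F L := by
    intro L
    have hnpow : ((n : ℂ)) ^ L ≠ 0 := pow_ne_zero _ hn0C
    push_cast
    rw [hd L, Nat.card_eq_fintype_card, ← mul_assoc, mul_inv_cancel₀ hcard0, one_mul,
      Finset.sum_div]
    refine Finset.sum_congr rfl fun g _ => ?_
    rw [div_pow, mul_div_assoc]
  -- termwise limits
  have hterm : ∀ g : G, Filter.Tendsto (fun L : ℕ => ψ g * (χ g / n) ^ L)
      Filter.atTop (nhds (if g = 1 then ψ 1 else 0)) := by
    intro g
    by_cases hg : g = 1
    · subst hg
      have hχ1 : χ 1 = (n : ℂ) := by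
        simp [hχ, LinearMap.trace_one, hn]
      rw [if_pos rfl, hχ1, div_self hn0C]
      simpa using tendsto_const_nhds
    · rw [if_neg hg]
      have hA1 : ρV g ≠ 1 := by
        intro h
        exact hg (hfaithful (h.trans (map_one ρV).symm))
      have hAm : (ρV g) ^ (orderOf g) = 1 := by
        rw [← map_pow, pow_orderOf_eq_one, map_one]
      have hlt : ‖χ g / (n : ℂ)‖ < 1 := by
        rw [norm_div]
        have hnn : ‖((n : ℕ) : ℂ)‖ = (n : ℝ) := by
          simp
        rw [hnn]
        rw [div_lt_one (by exact_mod_cast hnpos)]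
        exact EqAux.norm_trace_lt (orderOf_pos g).ne' hAm hv0 (hvinv g) hA1
      have h0 := tendsto_pow_atTop_nhds_zero_of_norm_lt_one hlt
      have := h0.const_mul (ψ g)
      simpa using this
  have hsum : Filter.Tendsto F Filter.atTop (nhds (ψ 1)) := by
    have h1 := tendsto_finset_sum Finset.univ (fun g (_ : g ∈ Finset.univ) => hterm g)
    have h2 : (∑ g : G, if g = 1 then ψ 1 else 0) = ψ 1 := by
      rw [Finset.sum_ite_eq' Finset.univ (1 : G) (fun _ => ψ 1)]
      simp
    rw [h2] at h1
    exact h1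
  have hψ1 : ψ 1 = (Module.finrank ℂ W : ℂ) := by
    simp [hψ, LinearMap.trace_one]
  -- real convergence
  have hmainT : Filter.Tendsto
      (fun L : ℕ => (Nat.card G : ℝ) * (Module.finrank ℂ (equivariantHom ρV ρW L) : ℝ) /
        (Module.finrank ℂ V : ℝ) ^ L)
      Filter.atTop (nhds (Module.finrank ℂ W : ℝ)) := by
    have hre : Filter.Tendsto (fun L => (F L).re) Filter.atTop (nhds ((ψ 1).re)) :=
      (Complex.continuous_re.tendsto _).comp hsum
    have heq : (fun L : ℕ => (Nat.card G : ℝ) *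
        (Module.finrank ℂ (equivariantHom ρV ρW L) : ℝ) / (Module.finrank ℂ V : ℝ) ^ L)
        = fun L => (F L).re := by
      funext L
      rw [← hreal L, Complex.ofReal_re]
    rw [heq]
    have : (ψ 1).re = (Module.finrank ℂ W : ℝ) := by
      rw [hψ1]
      simp
    rw [← this]
    exact hre
  refine ⟨hmainT, ?_⟩
  intro hGnt
  -- finrank V ≥ 2
  have hn2 : 2 ≤ n := by
    by_contra hcon
    push_neg at hcon
    interval_cases n
    -- n = 1 : every ρV g is the identity
    case _ h1 h2 =>
      have hspan : Submodule.span ℂ {v} = ⊤ :=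
        (finrank_eq_one_iff_of_nonzero v hv0).1 hn.symm
      obtain ⟨a, b, hab⟩ := hGnt
      apply hab
      apply hfaithful
      refine LinearMap.ext fun x => ?_
      have hx : x ∈ Submodule.span ℂ {v} := hspan ▸ Submodule.mem_top
      obtain ⟨c, rfl⟩ := Submodule.mem_span_singleton.1 hx
      rw [map_smul, map_smul, hvinv, hvinv]
  have hW1 : (1 : ℝ) ≤ (Module.finrank ℂ W : ℝ) := by
    exact_mod_cast Module.finrank_pos
  set ℓ : ℝ := (Module.finrank ℂ W : ℝ) with hℓ
  have hev : ∀ᶠ L : ℕ in Filter.atTop,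
      ℓ / 2 < (Nat.card G : ℝ) * (Module.finrank ℂ (equivariantHom ρV ρW L) : ℝ) /
        (Module.finrank ℂ V : ℝ) ^ L :=
    hmainT.eventually (eventually_gt_nhds (by linarith))
  refine ⟨ℓ / (2 * (Nat.card G : ℝ)), (n : ℝ), ?_, by exact_mod_cast hn2, ?_⟩
  · have : (0 : ℝ) < (Nat.card G : ℝ) := by
      rw [Nat.card_eq_fintype_card]; exact_mod_cast hcardpos
    positivity
  · refine hev.mono fun L hL => ?_
    have hcardR : (0 : ℝ) < (Nat.card G : ℝ) := by
      rw [Nat.card_eq_fintype_card]; exact_mod_cast hcardpos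
    have hpow : (0 : ℝ) < (n : ℝ) ^ L := by positivity
    rw [lt_div_iff₀ hpow] at hL
    rw [div_mul_eq_mul_div, div_le_iff₀ (by linarith : (0:ℝ) < 2 * (Nat.card G : ℝ))]
    nlinarith [hL, hpow]
end

section
/- Let H be a complex Hilbert space, let x and y be unit vectors in H, and suppose the inner product ⟨x, y⟩ is a real number satisfying ⟨x, y⟩ ≥ 1 − ε for some ε with 0 ≤ ε ≤ 1. Then there exists a unitary operator U on H such that U x = y, U z = z for every vector z orthogonal to both x and y, and ‖1 − U‖ ≤ √(2ε). -/
open scoped InnerProductSpace ComplexConjugate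

lemma aux_rot_bound {H : Type*} [NormedAddCommGroup H] [InnerProductSpace ℂ H]
    (x w z : H) (μ : ℝ) (hμ0 : 0 < μ) (hμ2 : μ < 2)
    (hx : ⟪x,x⟫_ℂ = 1) (hw : ⟪w,w⟫_ℂ = ((2*μ : ℝ):ℂ)) (hxw : ⟪x,w⟫_ℂ = ((μ:ℝ):ℂ)) :
    ‖(2*⟪x,z⟫_ℂ*(μ:ℂ)) • x - (2*⟪x,z⟫_ℂ*(μ:ℂ) - ⟪w,z⟫_ℂ) • w‖^2
      ≤ μ^2 * (2*(2-μ)) * ‖z‖^2 := by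
  set a := ⟪x,z⟫_ℂ with ha
  set n := ⟪w,z⟫_ℂ with hn
  have hwx : ⟪w,x⟫_ℂ = ((μ:ℝ):ℂ) := by rw [← inner_conj_symm, hxw]; simp
  have hzx : ⟪z,x⟫_ℂ = conj a := by rw [ha, inner_conj_symm]
  have hzw : ⟪z,w⟫_ℂ = conj n := by rw [hn, inner_conj_symm]
  set L : ℝ := 2*μ*Complex.normSq a - 2*μ*((conj a) * n).re + Complex.normSq n with hL
  have h1 : ‖(2*a*(μ:ℂ)) • x - (2*a*(μ:ℂ) - n) • w‖^2 = 2*μ*L := by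
    rw [← inner_self_eq_norm_sq (𝕜 := ℂ), hL]
    simp [inner_sub_left, inner_sub_right, inner_smul_left, inner_smul_right, hx, hw, hxw, hwx,
      hzx, hzw, Complex.normSq_apply, Complex.mul_re, Complex.mul_im, Complex.sub_re,
      Complex.sub_im, -inner_self_eq_norm_sq_to_K]
    ring
  have h2 : (2*μ-μ^2) * ((2*μ-μ^2) * ‖z‖^2 - L) =
      ‖((2*μ-μ^2 : ℝ):ℂ) • z - (((2*(μ:ℂ)*a - (μ:ℂ)*n) • x + (n - (μ:ℂ)*a) • w))‖^2 := by
    conv_rhs => rw [← inner_self_eq_norm_sq (𝕜 := ℂ)]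
    rw [hL]
    simp only [inner_sub_left, inner_sub_right, inner_add_left, inner_add_right, inner_smul_left,
      inner_smul_right, hx, hw, hxw, hwx, hzx, hzw]
    simp only [inner_self_eq_norm_sq_to_K]
    simp [Complex.normSq_apply, Complex.mul_re, Complex.mul_im, Complex.sub_re, Complex.sub_im,
      ← Complex.ofReal_pow]
    ring
  have hdet : 0 < 2*μ - μ^2 := by nlinarith
  have h3 : L ≤ (2*μ-μ^2) * ‖z‖^2 := by
    have h4 : 0 ≤ (2*μ-μ^2) * ((2*μ-μ^2) * ‖z‖^2 - L) := h2 ▸ sq_nonneg _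
    nlinarith [h4, hdet]
  rw [h1]; nlinarith [h3, hμ0]

/-- If `x`, `y` are unit vectors in a complex Hilbert space whose inner product is a real
number `≥ 1 - ε`, then there is a unitary taking `x` to `y`, fixing every vector orthogonal
to both, and at operator-norm distance at most `√(2ε)` from the identity. -/
theorem exists_unitary_rotation_close_to_id
    {H : Type*} [NormedAddCommGroup H] [InnerProductSpace ℂ H] [CompleteSpace H]
    (x y : H) (hx : ‖x‖ = 1) (hy : ‖y‖ = 1)
    (ε : ℝ) (hε0 : 0 ≤ ε) (hε1 : ε ≤ 1)
    (hreal : ⟪x, y⟫_ℂ = (((⟪x, y⟫_ℂ).re : ℝ) : ℂ))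
    (hge : 1 - ε ≤ (⟪x, y⟫_ℂ).re) :
    ∃ U : H →L[ℂ] H, U ∈ unitary (H →L[ℂ] H) ∧ U x = y ∧
      (∀ z : H, ⟪x, z⟫_ℂ = 0 → ⟪y, z⟫_ℂ = 0 → U z = z) ∧
      ‖(1 : H →L[ℂ] H) - U‖ ≤ Real.sqrt (2 * ε) := by
  set t : ℝ := (⟪x, y⟫_ℂ).re with hts
  have hxx : ⟪x,x⟫_ℂ = 1 := by
    rw [inner_self_eq_norm_sq_to_K, hx]; norm_num
  have hyy : ⟪y,y⟫_ℂ = 1 := by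
    rw [inner_self_eq_norm_sq_to_K, hy]; norm_num
  have hxy : ⟪x,y⟫_ℂ = ((t:ℝ):ℂ) := hreal
  have hyx : ⟪y,x⟫_ℂ = ((t:ℝ):ℂ) := by
    rw [← inner_conj_symm, hxy]; simp
  have ht0 : 0 ≤ t := by linarith
  have ht1 : t ≤ 1 := by
    have h1 : t ≤ ‖⟪x,y⟫_ℂ‖ := by
      calc t ≤ |t| := le_abs_self t
        _ = ‖⟪x,y⟫_ℂ‖ := by rw [hxy]; simp
    have h2 : ‖⟪x,y⟫_ℂ‖ ≤ ‖x‖ * ‖y‖ := norm_inner_le_norm x y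
    rw [hx, hy] at h2; linarith
  by_cases hteq : (1:ℝ) ≤ t
  · -- `t = 1`, so `y = x`; take `U = 1`.
    have ht : t = 1 := le_antisymm ht1 hteq
    have hxyeq : y = x := by
      have h0 : ⟪x - y, x - y⟫_ℂ = 0 := by
        simp only [inner_sub_left, inner_sub_right, hxx, hyy, hxy, hyx, ht]; simp
      have h1 := inner_self_eq_zero.mp h0
      have h2 : x = y := by rwa [sub_eq_zero] at h1
      exact h2.symm
    exact ⟨1, one_mem _, by simp [hxyeq], fun z _ _ => rfl, by simp [Real.sqrt_nonneg]⟩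
  · push_neg at hteq
    set w : H := x + y with hws
    have hμ0 : (0:ℝ) < 1 + t := by linarith
    set m : ℂ := ((1+t : ℝ):ℂ) with hms
    have hm0 : m ≠ 0 := by
      rw [hms]; exact_mod_cast (by linarith : (1+t:ℝ) ≠ 0)
    have hxw : ⟪x,w⟫_ℂ = m := by
      rw [hws, inner_add_right, hxx, hxy, hms]; push_cast; ring
    have hww : ⟪w,w⟫_ℂ = 2*m := by
      rw [hws, inner_add_left, inner_add_right, inner_add_right, hxx, hxy, hyx, hyy, hms]
      push_cast; ring
    have hwx : ⟪w,x⟫_ℂ = m := by rw [← inner_conj_symm, hxw]; simp [hms]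
    have hnw : (RCLike.ofReal ‖w‖ : ℂ)^2 = 2*m := by
      rw [show (RCLike.ofReal ‖w‖ : ℂ) = Complex.ofReal ‖w‖ from rfl,
        ← Complex.ofReal_pow, ← inner_self_eq_norm_sq (𝕜:=ℂ) w, hww, hms]
      simp
    have hR1 : ∀ z : H, Submodule.reflection (ℂ ∙ x) z = (2*⟪x,z⟫_ℂ) • x - z := by
      intro z
      rw [Submodule.reflection_singleton_apply, hx, ← Nat.cast_smul_eq_nsmul ℂ, smul_smul]
      norm_num
    have hR2 : ∀ v : H, Submodule.reflection (ℂ ∙ w) v = (⟪w,v⟫_ℂ/m) • w - v := by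
      intro v
      rw [Submodule.reflection_singleton_apply, hnw, ← Nat.cast_smul_eq_nsmul ℂ, smul_smul]
      congr 1
      field_simp
      ring
    set e : H ≃ₗᵢ[ℂ] H := (Submodule.reflection (ℂ ∙ x)).trans (Submodule.reflection (ℂ ∙ w)) with hes
    have hex : e x = y := by
      have h1 : Submodule.reflection (ℂ ∙ x) x = x :=
        Submodule.reflection_mem_subspace_eq_self (Submodule.mem_span_singleton_self x)
      have h2 : e x = Submodule.reflection (ℂ ∙ w) x := by rw [hes]; simp [h1]
      rw [h2, hR2, hwx, div_self hm0, one_smul, hws]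
      abel
    have hfix : ∀ z : H, ⟪x,z⟫_ℂ = 0 → ⟪y,z⟫_ℂ = 0 → e z = z := by
      intro z h1 h2
      have hwz : ⟪w,z⟫_ℂ = 0 := by rw [hws, inner_add_left, h1, h2]; ring
      have h3 : e z = Submodule.reflection (ℂ ∙ w) (Submodule.reflection (ℂ ∙ x) z) := rfl
      rw [h3, hR1, h1, hR2]
      simp [inner_sub_right, inner_smul_right, hwz]
    have hbound : ∀ z : H, ‖z - e z‖ ≤ Real.sqrt (2*ε) * ‖z‖ := by
      intro z
      set a := ⟪x,z⟫_ℂ with has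
      set n := ⟪w,z⟫_ℂ with hns
      have hez : e z = ((2*a*m - n)/m) • w - ((2*a) • x - z) := by
        have h3 : e z = Submodule.reflection (ℂ ∙ w) (Submodule.reflection (ℂ ∙ x) z) := rfl
        rw [h3, hR1, hR2, inner_sub_right, inner_smul_right, hwx, ← has, ← hns]
      have hsub : m • (z - e z) = (2*a*m) • x - (2*a*m - n) • w := by
        rw [hez]
        match_scalars
        · field_simp; simp
        · field_simp; ring
        · field_simp
      have hb := aux_rot_bound x w z (1+t) hμ0 (by linarith) hxx
        (by rw [hww, hms]; push_cast; ring) (by rw [hxw, hms])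
      rw [← has, ← hns, ← hms, ← hsub] at hb
      have hnm : ‖m • (z - e z)‖^2 = (1+t)^2 * ‖z - e z‖^2 := by
        rw [norm_smul, mul_pow]
        congr 1
        rw [hms, Complex.norm_real, Real.norm_eq_abs, abs_of_pos hμ0]
      rw [hnm] at hb
      have h5 : ‖z - e z‖^2 ≤ (2*(1-t)) * ‖z‖^2 := by
        have hp : (0:ℝ) < (1+t)^2 := by positivity
        nlinarith [hb]
      have h6 : ‖z - e z‖^2 ≤ (Real.sqrt (2*ε) * ‖z‖)^2 := by
        rw [mul_pow, Real.sq_sqrt (by linarith : (0:ℝ) ≤ 2*ε)]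
        nlinarith [h5, sq_nonneg ‖z‖]
      have h7 : (0:ℝ) ≤ Real.sqrt (2*ε) * ‖z‖ := by positivity
      nlinarith [h6, h7, norm_nonneg (z - e z)]
    set u : unitary (H →L[ℂ] H) := Unitary.linearIsometryEquiv.symm e with hus
    have hcoe : ∀ z : H, (u : H →L[ℂ] H) z = e z := fun z => rfl
    refine ⟨(u : H →L[ℂ] H), u.2, by rw [hcoe, hex], fun z h1 h2 => by rw [hcoe, hfix z h1 h2], ?_⟩
    refine ContinuousLinearMap.opNorm_le_bound _ (Real.sqrt_nonneg _) fun z => ?_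
    have h8 : ((1 : H →L[ℂ] H) - (u : H →L[ℂ] H)) z = z - e z := by
      rw [ContinuousLinearMap.sub_apply, ContinuousLinearMap.one_apply, hcoe]
    rw [h8]
    exact hbound z
end

section
/- Let 𝔸 be a unital C*-algebra and A : ℝ → 𝔸 a continuous map such that A(t) is self-adjoint for every t ∈ ℝ. Let E be a solution of the ordered-exponential equation for A. Then E(t) is unitary for every t ∈ ℝ, that is, E(t)*·E(t) = 1 and E(t)·E(t)* = 1. -/
/-- If `A : ℝ → 𝔸` is a continuous map into a unital C*-algebra with `A t` self-adjoint
for every `t`, and `E` solves the ordered-exponential equation for `A`, then `E t` is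
unitary for every `t`. -/
theorem orderedExponential_unitary
    {𝔸 : Type*} [NormedRing 𝔸] [StarRing 𝔸] [CStarRing 𝔸]
    [NormedAlgebra ℂ 𝔸] [StarModule ℂ 𝔸] [CompleteSpace 𝔸]
    (A : ℝ → 𝔸) (hA : Continuous A) (hAsa : ∀ t : ℝ, IsSelfAdjoint (A t))
    (E : ℝ → 𝔸) (hE0 : E 0 = 1)
    (hE : ∀ t : ℝ, HasDerivAt E (Complex.I • (E t * A t)) t) :
    ∀ t : ℝ, E t ∈ unitary 𝔸 := by
  -- derivative of star E
  have hEstar : ∀ t : ℝ, HasDerivAt (fun s => star (E s))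
      ((-Complex.I) • (A t * star (E t))) t := by
    intro t
    have h := (hE t).star
    have : star (Complex.I • (E t * A t)) = (-Complex.I) • (A t * star (E t)) := by
      rw [star_smul, star_mul, (hAsa t).star_eq, Complex.star_def, Complex.conj_I]
    rwa [this] at h
  -- E * star E has zero derivative
  have hright : ∀ t : ℝ, E t * star (E t) = 1 := by
    have hconst : ∀ t : ℝ, E t * star (E t) = E 0 * star (E 0) := by
      intro t
      have hderiv : ∀ s : ℝ, HasDerivAt (fun u => E u * star (E u)) 0 s := by
        intro s
        have h := (hE s).mul (hEstar s)
        have : Complex.I • (E s * A s) * star (E s) +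
            E s * ((-Complex.I) • (A s * star (E s))) = 0 := by
          rw [smul_mul_assoc, mul_smul_comm, neg_smul, ← mul_assoc, add_neg_cancel]
        rwa [this] at h
      exact is_const_of_deriv_eq_zero (fun s => (hderiv s).differentiableAt)
        (fun s => (hderiv s).deriv) t 0
    intro t
    rw [hconst t, hE0, star_one, one_mul]
  -- P = star E * E : idempotent, continuous, P 0 = 1
  set P : ℝ → 𝔸 := fun t => star (E t) * E t with hP
  have hEcont : Continuous E := by
    have : Differentiable ℝ E := fun t => (hE t).differentiableAt
    exact this.continuous
  have hPcont : Continuous P := (continuous_star.comp hEcont).mul hEcont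
  have hPidem : ∀ t, P t * P t = P t := by
    intro t
    calc star (E t) * E t * (star (E t) * E t)
        = star (E t) * (E t * star (E t)) * E t := by
          simp only [mul_assoc]
      _ = star (E t) * E t := by rw [hright t, mul_one]
  have hP0 : P 0 = 1 := by simp [hP, hE0]
  -- clopen argument: {t | P t = 1} = univ
  have hS : {t : ℝ | P t = 1} = Set.univ := by
    apply IsClopen.eq_univ
    · constructor
      · exact isClosed_eq hPcont continuous_const
      · rw [isOpen_iff_mem_nhds]
        intro s hs
        have hnear : ∀ᶠ t in nhds s, ‖1 - P t‖ < 1 := by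
          have : Continuous fun t => ‖(1 : 𝔸) - P t‖ :=
            (continuous_const.sub hPcont).norm
          have h0 : ‖(1 : 𝔸) - P s‖ < 1 := by
            rw [Set.mem_setOf_eq] at hs
            rw [hs]; simp
          exact (this.tendsto s).eventually_lt_const h0
        filter_upwards [hnear] with t ht
        set u := Units.oneSub (1 - P t) ht with hu
        have huv : (u : 𝔸) = P t := by
          rw [hu]; simp [Units.oneSub]
        have h1 : (↑u⁻¹ : 𝔸) * (P t * P t) = (↑u⁻¹ : 𝔸) * P t := by
          rw [hPidem t]
        rw [← mul_assoc, ← huv, u.inv_mul, one_mul, huv] at h1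
        exact h1
    · exact ⟨0, hP0⟩
  intro t
  have hPt : P t = 1 := by
    have := hS ▸ Set.mem_univ t
    exact this
  exact Unitary.mem_iff.mpr ⟨hPt, hright t⟩
end

section
/- Let 𝔸 be a complex unital Banach algebra, G a group, and ρ a homomorphism from G into the group of continuous unital ℂ-algebra automorphisms of 𝔸. Let F : ℝ → 𝔸 be continuous and let E be a solution of the ordered-exponential equation for F such that E(t) is invertible for every t. For each g ∈ G define F_g : ℝ → 𝔸 by F_g(t) = ρ(g)( E(t)·( ρ(g⁻¹)(F(t)) − F(t) )·E(t)⁻¹ ), and let E_g be a solution of the ordered-exponential equation for F_g. Then for all g, h ∈ G and all t ∈ ℝ one has E_{g·h}(t) = E_g(t) · ρ(g)(E_h(t)). -/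
private lemma ode_unique' {𝔸 : Type*} [NormedRing 𝔸] [NormedAlgebra ℂ 𝔸] [CompleteSpace 𝔸]
    {A Z W : ℝ → 𝔸}
    (hZ0 : Z 0 = 1) (hZ : ∀ t, HasDerivAt Z (Complex.I • (Z t * A t)) t)
    (hW0 : W 0 = 1) (hW : ∀ t, HasDerivAt W (Complex.I • (W t * A t)) t)
    (hWu : ∀ t, IsUnit (W t)) (t : ℝ) : Z t = W t := by
  set u : ℝ → 𝔸 := fun s => Ring.inverse (W s) with hu_def
  have huW : ∀ s, u s * W s = 1 := fun s => Ring.inverse_mul_cancel _ (hWu s)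
  have hu : ∀ s, HasDerivAt u (-(u s * (Complex.I • (W s * A s)) * u s)) s := by
    intro s
    obtain ⟨w, hw⟩ := hWu s
    have h1 : HasFDerivAt Ring.inverse
        (-(ContinuousLinearMap.mulLeftRight ℂ 𝔸 ↑w⁻¹ ↑w⁻¹)) (W s) := by
      rw [← hw]; exact hasFDerivAt_ringInverse (𝕜 := ℂ) w
    have h2 := (h1.restrictScalars ℝ).comp_hasDerivAt s (hW s)
    convert h2 using 1
    · rfl
    · rfl
    simp [hu_def, ← hw, Ring.inverse_unit]
  have hf : ∀ s, HasDerivAt (fun r => Z r * u r) 0 s := by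
    intro s
    have h := (hZ s).mul (hu s)
    convert h using 1
    · rfl
    have key : Z s * (u s * (Complex.I • (W s * A s)) * u s)
        = Complex.I • (Z s * A s) * u s := by
      simp only [mul_smul_comm, smul_mul_assoc]
      congr 1
      rw [← mul_assoc (u s) (W s) (A s), huW s, one_mul, ← mul_assoc]
    rw [mul_neg, key]
    abel
  have hconst : Z t * u t = Z 0 * u 0 := by
    apply is_const_of_deriv_eq_zero (f := fun r => Z r * u r)
    · exact fun s => ((hf s).differentiableAt)
    · exact fun s => (hf s).deriv
  have h0 : Z 0 * u 0 = 1 := by simp [hZ0, hu_def, hW0]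
  have h1 : Z t * u t = 1 := hconst.trans h0
  calc Z t = Z t * (u t * W t) := by rw [huW t, mul_one]
    _ = (Z t * u t) * W t := by rw [mul_assoc]
    _ = W t := by rw [h1, one_mul]

/-- Let `ρ` be an action of a group `G` by continuous unital `ℂ`-algebra automorphisms of
a complex unital Banach algebra `𝔸`, let `E` be an invertible-valued solution of the
ordered-exponential equation for a continuous `F : ℝ → 𝔸`, and for each `g` let `E_g` be
a solution of the ordered-exponential equation for
`F_g t = ρ g (E t * (ρ g⁻¹ (F t) - F t) * (E t)⁻¹)`.  Then
`E_{g·h} t = E_g t * ρ g (E_h t)` for all `g`, `h` and `t`. -/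
theorem orderedExponential_cocycle_identity
    {𝔸 : Type*} [NormedRing 𝔸] [NormedAlgebra ℂ 𝔸] [CompleteSpace 𝔸]
    {G : Type*} [Group G]
    (ρ : G →* (𝔸 ≃ₐ[ℂ] 𝔸)) (hρ : ∀ g : G, Continuous (ρ g))
    (F : ℝ → 𝔸) (hF : Continuous F)
    (E : ℝ → 𝔸) (hE0 : E 0 = 1)
    (hE : ∀ t : ℝ, HasDerivAt E (Complex.I • (E t * F t)) t)
    (hEunit : ∀ t : ℝ, IsUnit (E t))
    (Eg : G → ℝ → 𝔸) (hEg0 : ∀ g : G, Eg g 0 = 1)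
    (hEg : ∀ (g : G) (t : ℝ), HasDerivAt (Eg g)
      (Complex.I • (Eg g t *
        (ρ g (E t * (ρ g⁻¹ (F t) - F t) * Ring.inverse (E t))))) t) :
    ∀ (g h : G) (t : ℝ), Eg (g * h) t = Eg g t * ρ g (Eg h t) := by
  -- derivative through ρ g
  have hLd : ∀ (g : G) (f : ℝ → 𝔸) (f' : 𝔸) (t : ℝ), HasDerivAt f f' t →
      HasDerivAt (fun s => ρ g (f s)) (ρ g f') t := by
    intro g f f' t hf
    let L : 𝔸 →L[ℂ] 𝔸 := { toLinearMap := (ρ g).toLinearMap, cont := hρ g }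
    exact (L.restrictScalars ℝ).hasFDerivAt.comp_hasDerivAt t hf
  -- main claim: Eg g t * ρ g (E t) = E t
  have claim : ∀ (g : G) (t : ℝ), Eg g t * ρ g (E t) = E t := by
    intro g t
    have hK : ∀ s, HasDerivAt (fun r => Eg g r * ρ g (E r))
        (Complex.I • ((Eg g s * ρ g (E s)) * F s)) s := by
      intro s
      have h := (hEg g s).mul (hLd g E _ s (hE s))
      have hinv : Ring.inverse (E s) * E s = 1 := Ring.inverse_mul_cancel _ (hEunit s)
      have hrr : ρ g (ρ g⁻¹ (F s)) = F s := by
        rw [← AlgEquiv.mul_apply, ← map_mul, mul_inv_cancel, map_one, AlgEquiv.one_apply]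
      have hsm : (ρ g) (Complex.I • (E s * F s)) = Complex.I • (ρ g) (E s * F s) :=
        map_smul (ρ g) Complex.I (E s * F s)
      have goal2 : Eg g s * (ρ g) (E s * ((ρ g⁻¹) (F s) - F s) * Ring.inverse (E s)) * (ρ g) (E s)
          + Eg g s * (ρ g) (E s * F s) = Eg g s * (ρ g) (E s) * F s := by
        rw [mul_assoc (Eg g s), ← map_mul,
          mul_assoc (E s * ((ρ g⁻¹) (F s) - F s)) (Ring.inverse (E s)) (E s), hinv, mul_one,
          ← mul_add, ← map_add, ← mul_add, sub_add_cancel, map_mul, hrr, mul_assoc]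
      convert h using 1
      · rfl
      rw [hsm, smul_mul_assoc, mul_smul_comm, ← smul_add, goal2]
    have hK0 : Eg g 0 * ρ g (E 0) = 1 := by simp [hEg0, hE0]
    exact ode_unique' hK0 hK hE0 hE hEunit t
  intro g h t
  have h1 := claim (g * h) t
  have h2 := claim g t
  have h3 := claim h t
  have ha : IsUnit (ρ g (ρ h (E t))) := ((hEunit t).map (ρ h)).map (ρ g)
  apply ha.mul_right_cancel
  calc Eg (g * h) t * ρ g (ρ h (E t)) = Eg (g * h) t * ρ (g * h) (E t) := by
        rw [map_mul ρ g h, AlgEquiv.mul_apply]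
    _ = E t := h1
    _ = Eg g t * ρ g (E t) := h2.symm
    _ = Eg g t * ρ g (Eg h t * ρ h (E t)) := by rw [h3]
    _ = Eg g t * ρ g (Eg h t) * ρ g (ρ h (E t)) := by rw [map_mul, mul_assoc]
end
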